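/- In the Subbotin setting with parameter ζ > 1, for any δ ≥ 0, any integer ρ with 1 ≤ ρ ≤ log(1/ω_{δ,n/s_n})/2, and any b ∈ ℝ, one has p_n(b,ρ) ≥ F̄(b+δ) − ω_{δ,n/s_n}^{1/10}. -/

import Mathlib

open MeasureTheory ProbabilityTheory Filter
open scoped Classical ENNReal

noncomputable section

/-- Unnormalized Subbotin density `e^{-|x|^ζ/ζ}`. -/
def sDensity (ζ : ℝ) (x : ℝ) : ℝ := Real.exp (-|x| ^ ζ / ζ)

/-- Normalizing constant `L_ζ = ∫ e^{-|x|^ζ/ζ} dx`. -/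
def Lz (ζ : ℝ) : ℝ := ∫ x : ℝ, sDensity ζ x

/-- Subbotin density `f(x) = L_ζ⁻¹ e^{-|x|^ζ/ζ}`. -/
def sf (ζ : ℝ) (x : ℝ) : ℝ := (Lz ζ)⁻¹ * sDensity ζ x

/-- Subbotin noise distribution: the measure with density `f` w.r.t. Lebesgue measure. -/
def noiseMeasure (ζ : ℝ) : Measure ℝ :=
  MeasureTheory.volume.withDensity fun x => ENNReal.ofReal (sf ζ x)

/-- Subbotin upper tail function `F̄(x) = ∫_x^∞ f(u) du`. -/
def Fbar (ζ : ℝ) (x : ℝ) : ℝ := ∫ u in Set.Ioi x, sf ζ u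

/-- Law of the observation `X = θ + ε` with `ε_i` i.i.d. Subbotin(ζ) noise. -/
def obsLaw {n : ℕ} (ζ : ℝ) (θ : Fin n → ℝ) : Measure (Fin n → ℝ) :=
  Measure.pi fun i =>
    MeasureTheory.volume.withDensity fun x => ENNReal.ofReal (sf ζ (x - θ i))

/-- Number of rejections of the decision vector `v`. -/
def numRej {n : ℕ} (v : Fin n → Bool) : ℕ :=
  (Finset.univ.filter fun i => v i = true).card

/-- Support of `θ`. -/
def supp {n : ℕ} (θ : Fin n → ℝ) : Finset (Fin n) :=
  Finset.univ.filter fun i => θ i ≠ 0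

/-- False discovery proportion. -/
def FDP {n : ℕ} (θ : Fin n → ℝ) (v : Fin n → Bool) : ℝ :=
  ((Finset.univ.filter fun i => θ i = 0 ∧ v i = true).card : ℝ) / max 1 (numRej v : ℝ)

/-- False negative proportion. -/
def FNP {n : ℕ} (θ : Fin n → ℝ) (v : Fin n → Bool) : ℝ :=
  ((Finset.univ.filter fun i => θ i ≠ 0 ∧ v i = false).card : ℝ) / max 1 ((supp θ).card : ℝ)

/-- False discovery rate. -/
def FDR {n : ℕ} (ζ : ℝ) (θ : Fin n → ℝ) (φ : (Fin n → ℝ) → Fin n → Bool) : ℝ :=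
  ∫ x, FDP θ (φ x) ∂(obsLaw ζ θ)

/-- False negative rate. -/
def FNR {n : ℕ} (ζ : ℝ) (θ : Fin n → ℝ) (φ : (Fin n → ℝ) → Fin n → Bool) : ℝ :=
  ∫ x, FNP θ (φ x) ∂(obsLaw ζ θ)

/-- Combined multiple testing risk `𝔎 = FDR + FNR`. -/
def mtRisk {n : ℕ} (ζ : ℝ) (θ : Fin n → ℝ) (φ : (Fin n → ℝ) → Fin n → Bool) : ℝ :=
  FDR ζ θ φ + FNR ζ θ φ

/-- Oracle threshold `a* = (ζ log(n/s_n))^{1/ζ}`. -/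
def astar (ζ : ℝ) (n s : ℕ) : ℝ := (ζ * Real.log ((n : ℝ) / (s : ℝ))) ^ (1 / ζ)

/-- The class `Θ_𝐛`: sparse vectors with `s` coordinates (at distinct positions) whose
absolute values are at least `a* + b_j`, `j = 1, …, s`. -/
def ThetaMult (ζ : ℝ) (n s : ℕ) (b : Fin s → ℝ) : Set (Fin n → ℝ) :=
  {θ | (supp θ).card ≤ s ∧
    ∃ ι : Fin s → Fin n, Function.Injective ι ∧
      ∀ j, astar ζ n s + b j ≤ |θ (ι j)|}

/-- `Λ_n(𝐛) = s⁻¹ Σ_j F̄(b_j)`. -/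
def Lambda (ζ : ℝ) (s : ℕ) (b : Fin s → ℝ) : ℝ := (∑ j, Fbar ζ (b j)) / (s : ℝ)

/-- `p_n(b,ρ) = P(#{2 ≤ i ≤ ⌊n/s⌋ : ε_i > a_b + ε_1} ≥ ρ)` for i.i.d. Subbotin noise,
realised on the product space `ℝ × (Fin (⌊n/s⌋ - 1) → ℝ)` where the first coordinate
plays the role of `ε_1`. -/
def pn (ζ : ℝ) (n s : ℕ) (b : ℝ) (ρ : ℕ) : ℝ :=
  (((noiseMeasure ζ).prod (Measure.pi fun _ : Fin (n / s - 1) => noiseMeasure ζ))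
    {p | ρ ≤ (Finset.univ.filter fun i => astar ζ n s + b + p.1 < p.2 i).card}).toReal

/-- `𝔉̄_n(𝐛,ρ) = s⁻¹ Σ_j p_n(b_j,ρ)`. -/
def Fcal (ζ : ℝ) (n s : ℕ) (b : Fin s → ℝ) (ρ : ℕ) : ℝ :=
  (∑ j, pn ζ n s (b j) ρ) / (s : ℝ)

/-- `ω_{δ,q} = exp(−(⌊q⌋−1) F̄((ζ log q)^{1/ζ} − δ))`. -/
def omegaDQ (ζ δ q : ℝ) : ℝ :=
  Real.exp (-((⌊q⌋ : ℝ) - 1) * Fbar ζ ((ζ * Real.log q) ^ (1 / ζ) - δ))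


/-! ### Auxiliary lemmas -/

lemma sDensity_pos (ζ x : ℝ) : 0 < sDensity ζ x := Real.exp_pos _

lemma integrable_sDensity {ζ : ℝ} (hζ : 1 < ζ) : Integrable (sDensity ζ) := by
  have h0 : IntegrableOn (sDensity ζ) (Set.Ioi 0) := by
    have hζ0' : (0:ℝ) < ζ := by linarith
    have := integrableOn_rpow_mul_exp_neg_mul_rpow (p := ζ) (s := 0) (b := 1/ζ)
      (by norm_num) hζ0' (by positivity)
    refine (this.congr_fun (fun x hx => ?_) measurableSet_Ioi)
    simp only [Set.mem_Ioi] at hx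
    simp [sDensity, Real.rpow_zero, abs_of_pos hx, neg_div, div_eq_mul_inv, mul_comm]
  have hsymm : ∀ x : ℝ, sDensity ζ (-x) = sDensity ζ x := by intro x; simp [sDensity]
  rw [← integrableOn_univ, ← @Set.Iio_union_Ici _ _ (0 : ℝ), integrableOn_union,
    integrableOn_Ici_iff_integrableOn_Ioi]
  refine ⟨?_, h0⟩
  rw [← (Measure.measurePreserving_neg (volume : Measure ℝ)).integrableOn_comp_preimage
      (Homeomorph.neg ℝ).measurableEmbedding]
  simp only [Function.comp_def, Set.neg_preimage, Set.neg_Iio, neg_neg, neg_zero]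
  exact h0.congr_fun (fun x _ => (hsymm x).symm) measurableSet_Ioi

lemma Lz_pos {ζ : ℝ} (hζ : 1 < ζ) : 0 < Lz ζ := by
  rw [Lz]
  rw [integral_pos_iff_support_of_nonneg (fun x => (sDensity_pos ζ x).le) (integrable_sDensity hζ)]
  have : Function.support (sDensity ζ) = Set.univ := by
    ext x; simp [Function.mem_support, (sDensity_pos ζ x).ne']
  simp [this]

lemma sf_pos {ζ : ℝ} (hζ : 1 < ζ) (x : ℝ) : 0 < sf ζ x :=
  mul_pos (inv_pos.2 (Lz_pos hζ)) (sDensity_pos ζ x)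

lemma integrable_sf {ζ : ℝ} (hζ : 1 < ζ) : Integrable (sf ζ) :=
  (integrable_sDensity hζ).const_mul _

lemma integral_sf {ζ : ℝ} (hζ : 1 < ζ) : ∫ x, sf ζ x = 1 := by
  have : ∫ x, sf ζ x = (Lz ζ)⁻¹ * ∫ x, sDensity ζ x := by
    simp only [sf]; exact integral_const_mul _ _
  rw [this, ← Lz, inv_mul_cancel₀ (Lz_pos hζ).ne']

lemma noise_prob {ζ : ℝ} (hζ : 1 < ζ) : IsProbabilityMeasure (noiseMeasure ζ) := by
  constructor
  rw [noiseMeasure, withDensity_apply _ MeasurableSet.univ, Measure.restrict_univ,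
    ← ofReal_integral_eq_lintegral_ofReal (integrable_sf hζ)
      (Filter.Eventually.of_forall fun x => (sf_pos hζ x).le),
    integral_sf hζ, ENNReal.ofReal_one]

lemma noise_Ioi {ζ : ℝ} (hζ : 1 < ζ) (c : ℝ) :
    noiseMeasure ζ (Set.Ioi c) = ENNReal.ofReal (Fbar ζ c) := by
  rw [noiseMeasure, withDensity_apply _ measurableSet_Ioi, Fbar,
    ← ofReal_integral_eq_lintegral_ofReal ((integrable_sf hζ).integrableOn)
      (Filter.Eventually.of_forall fun x => (sf_pos hζ x).le)]

lemma Fbar_nonneg {ζ : ℝ} (hζ : 1 < ζ) (c : ℝ) : 0 ≤ Fbar ζ c :=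
  setIntegral_nonneg measurableSet_Ioi fun x _ => (sf_pos hζ x).le

lemma Fbar_le_one {ζ : ℝ} (hζ : 1 < ζ) (c : ℝ) : Fbar ζ c ≤ 1 := by
  rw [← integral_sf hζ, Fbar]
  exact setIntegral_le_integral (integrable_sf hζ)
    (Filter.Eventually.of_forall fun x => (sf_pos hζ x).le)

lemma noise_Iio {ζ : ℝ} (hζ : 1 < ζ) (c : ℝ) :
    noiseMeasure ζ (Set.Iio (-c)) = ENNReal.ofReal (Fbar ζ c) := by
  have h1 : noiseMeasure ζ (Set.Iio (-c)) = noiseMeasure ζ (Set.Iic (-c)) := by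
    rw [noiseMeasure, withDensity_apply _ measurableSet_Iio, withDensity_apply _ measurableSet_Iic]
    rw [Measure.restrict_congr_set Iio_ae_eq_Iic]
  rw [h1, noiseMeasure, withDensity_apply _ measurableSet_Iic,
    ← ofReal_integral_eq_lintegral_ofReal ((integrable_sf hζ).integrableOn)
      (Filter.Eventually.of_forall fun x => (sf_pos hζ x).le), Fbar]
  congr 1
  rw [← integral_comp_neg_Ioi]
  refine setIntegral_congr_fun measurableSet_Ioi fun x _ => ?_
  simp [sf, sDensity]

lemma lintegral_pi_pow {m : ℕ} (μ : Measure ℝ) [SigmaFinite μ] (g : ℝ → ℝ≥0∞)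
    (hg : Measurable g) :
    ∫⁻ y, ∏ i, g (y i) ∂(Measure.pi fun _ : Fin m => μ) = (∫⁻ x, g x ∂μ) ^ m := by
  induction m with
  | zero => simp [lintegral_const, Measure.pi_univ]
  | succ n ih =>
      have h := (measurePreserving_piFinSuccAbove (fun _ : Fin (n+1) => μ) 0).symm
      rw [← h.lintegral_comp_emb
        (MeasurableEquiv.piFinSuccAbove (fun _ : Fin (n+1) => ℝ) 0).symm.measurableEmbedding]
      simp_rw [MeasurableEquiv.piFinSuccAbove_symm_apply, Fin.insertNthEquiv,
        Fin.prod_univ_succ, Fin.insertNth_zero]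
      simp only [Fin.zero_succAbove, Function.comp_def, Fin.cons_zero, Fin.cons_succ, cast_eq,
        Equiv.coe_fn_mk]
      rw [lintegral_prod_mul (f := g) (g := fun y : Fin n → ℝ => ∏ x, g (y x)) hg.aemeasurable
        (Finset.univ.measurable_prod fun i _ => hg.comp (measurable_pi_apply i)).aemeasurable,
        ih, pow_succ, mul_comm]

lemma chernoff_pi {m : ℕ} (μ : Measure ℝ) [IsProbabilityMeasure μ] (τ : ℝ) (k : ℕ) :
    (Measure.pi fun _ : Fin m => μ)
      {y | (Finset.univ.filter fun i => τ < y i).card ≤ k}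
      ≤ 2 ^ k * (2⁻¹ * μ (Set.Ioi τ) + (1 - μ (Set.Ioi τ))) ^ m := by
  set g : ℝ → ℝ≥0∞ := fun y => if τ < y then 2⁻¹ else 1 with hgdef
  have hg : Measurable g := Measurable.ite measurableSet_Ioi measurable_const measurable_const
  set f : (Fin m → ℝ) → ℝ≥0∞ := fun y => ∏ i, g (y i) with hfdef
  have hf : Measurable f := Finset.univ.measurable_prod fun i _ => hg.comp (measurable_pi_apply i)
  have hprod : ∀ y : Fin m → ℝ,
      f y = 2⁻¹ ^ (Finset.univ.filter fun i => τ < y i).card := by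
    intro y
    simp only [hfdef, hgdef]
    rw [Finset.prod_ite, Finset.prod_const, Finset.prod_const_one, mul_one]
  have hIg : ∫⁻ x, g x ∂μ = 2⁻¹ * μ (Set.Ioi τ) + (1 - μ (Set.Ioi τ)) := by
    have : g = fun y => (Set.Ioi τ).indicator (fun _ => (2⁻¹ : ℝ≥0∞)) y
        + (Set.Ioi τ)ᶜ.indicator (fun _ => 1) y := by
      funext y
      by_cases h : τ < y
      · simp [hgdef, h, Set.indicator_apply, Set.mem_Ioi]
      · simp [hgdef, h, Set.indicator_apply, Set.mem_Ioi, not_lt.mp h]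
    rw [this, lintegral_add_left ((measurable_const).indicator measurableSet_Ioi),
      lintegral_indicator measurableSet_Ioi, lintegral_indicator measurableSet_Ioi.compl,
      setLIntegral_const, setLIntegral_const, one_mul,
      measure_compl measurableSet_Ioi (measure_ne_top μ _), measure_univ]
  have hsub : {y : Fin m → ℝ | (Finset.univ.filter fun i => τ < y i).card ≤ k}
      ⊆ {y | (2⁻¹ : ℝ≥0∞) ^ k ≤ f y} := by
    intro y hy
    rw [Set.mem_setOf_eq, hprod y]
    exact pow_le_pow_right_of_le_one' (by norm_num) hy
  calc (Measure.pi fun _ : Fin m => μ) {y | (Finset.univ.filter fun i => τ < y i).card ≤ k}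
      ≤ (Measure.pi fun _ : Fin m => μ) {y | (2⁻¹ : ℝ≥0∞) ^ k ≤ f y} := measure_mono hsub
    _ ≤ 2 ^ k * ((2⁻¹ : ℝ≥0∞) ^ k *
          (Measure.pi fun _ : Fin m => μ) {y | (2⁻¹ : ℝ≥0∞) ^ k ≤ f y}) := by
        rw [← mul_assoc, ← mul_pow, ENNReal.mul_inv_cancel (by norm_num) (by norm_num), one_pow,
          one_mul]
    _ ≤ 2 ^ k * ∫⁻ y, f y ∂(Measure.pi fun _ : Fin m => μ) := by
        gcongr
        exact mul_meas_ge_le_lintegral₀ hf.aemeasurable _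
    _ = 2 ^ k * (2⁻¹ * μ (Set.Ioi τ) + (1 - μ (Set.Ioi τ))) ^ m := by
        rw [hfdef, lintegral_pi_pow μ g hg, hIg]

lemma real_chernoff_bound {m ρ : ℕ} {p : ℝ} (hp0 : 0 ≤ p) (hp1 : p ≤ 1)
    (hρ : (ρ : ℝ) ≤ (m : ℝ) * p / 2) :
    (2 : ℝ) ^ (ρ - 1) * (1 - p / 2) ^ m ≤ Real.exp (-((m : ℝ) * p) / 10) := by
  have hl2 : Real.log 2 < 0.6931471808 := Real.log_two_lt_d9
  have hl2' : 0 < Real.log 2 := Real.log_pos one_lt_two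
  have hmp : 0 ≤ (m : ℝ) * p := by positivity
  have h2 : (2 : ℝ) ^ (ρ - 1) = Real.exp (((ρ - 1 : ℕ) : ℝ) * Real.log 2) := by
    rw [← Real.rpow_natCast 2 (ρ - 1), Real.rpow_def_of_pos two_pos, mul_comm]
  have h3 : (1 - p / 2) ^ m ≤ Real.exp (-(p / 2) * (m : ℝ)) := by
    have := Real.add_one_le_exp (-(p / 2))
    calc (1 - p / 2) ^ m ≤ Real.exp (-(p / 2)) ^ m :=
          pow_le_pow_left₀ (by linarith) (by linarith) m
      _ = Real.exp (-(p / 2) * (m : ℝ)) := by rw [← Real.exp_nat_mul, mul_comm]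
  have hρ1 : ((ρ - 1 : ℕ) : ℝ) ≤ (ρ : ℝ) := by
    exact_mod_cast Nat.cast_le.mpr (Nat.sub_le ρ 1)
  calc (2 : ℝ) ^ (ρ - 1) * (1 - p / 2) ^ m
      ≤ Real.exp (((ρ - 1 : ℕ) : ℝ) * Real.log 2) * Real.exp (-(p / 2) * (m : ℝ)) := by
        rw [h2]; exact mul_le_mul_of_nonneg_left h3 (Real.exp_pos _).le
    _ = Real.exp (((ρ - 1 : ℕ) : ℝ) * Real.log 2 + -(p / 2) * (m : ℝ)) := (Real.exp_add _ _).symm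
    _ ≤ Real.exp (-((m : ℝ) * p) / 10) := by
        apply Real.exp_le_exp.mpr
        nlinarith [mul_le_mul_of_nonneg_right (hρ1.trans hρ) hl2'.le]

theorem statement_16 (ζ : ℝ) (hζ : 1 < ζ) (n s : ℕ)
    (hs : 1 ≤ s) (hsn : s ≤ n) (hq : 2 ≤ (n : ℝ) / (s : ℝ))
    (δ : ℝ) (hδ : 0 ≤ δ) (ρ : ℕ) (hρ : 1 ≤ ρ)
    (hρ_le : (ρ : ℝ) ≤ Real.log (1 / omegaDQ ζ δ ((n : ℝ) / (s : ℝ))) / 2)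
    (b : ℝ) :
    Fbar ζ (b + δ) - omegaDQ ζ δ ((n : ℝ) / (s : ℝ)) ^ ((1 : ℝ) / 10) ≤
      pn ζ n s b ρ := by
  classical
  have hζ0 : (0 : ℝ) < ζ := lt_trans one_pos hζ
  haveI hP : IsProbabilityMeasure (noiseMeasure ζ) := noise_prob hζ
  set m : ℕ := n / s - 1 with hmdef
  set τ : ℝ := astar ζ n s - δ with hτdef
  set pstar : ℝ := Fbar ζ τ with hpdef
  have hp0 : 0 ≤ pstar := Fbar_nonneg hζ τ
  have hp1 : pstar ≤ 1 := Fbar_le_one hζ τ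
  have hs0 : (0 : ℝ) < (s : ℝ) := by exact_mod_cast hs
  -- `n / s ≥ 2` in ℕ
  have hsd : 2 ≤ n / s := by
    rw [Nat.le_div_iff_mul_le hs]
    have h2s : (2 * s : ℝ) ≤ (n : ℝ) := by
      have := (le_div_iff₀ hs0).mp hq
      linarith
    exact_mod_cast h2s
  -- floor identification
  have hfl : (⌊(n : ℝ) / (s : ℝ)⌋ : ℝ) = ((n / s : ℕ) : ℝ) := by
    have h0 : (0 : ℝ) ≤ (n : ℝ) / (s : ℝ) := by positivity
    rw [← Int.natCast_floor_eq_floor h0, Nat.floor_div_natCast, Nat.floor_natCast]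
    norm_cast
  have hmcast : ((m : ℝ)) = (⌊(n : ℝ) / (s : ℝ)⌋ : ℝ) - 1 := by
    rw [hfl, hmdef]
    have h1 : 1 ≤ n / s := le_trans one_le_two hsd
    push_cast [Nat.cast_sub h1]
    ring
  -- rewrite omega
  have homega : omegaDQ ζ δ ((n : ℝ) / (s : ℝ)) = Real.exp (-((m : ℝ) * pstar)) := by
    have harg : Fbar ζ ((ζ * Real.log ((n : ℝ) / (s : ℝ))) ^ ((1:ℝ) / ζ) - δ) = pstar := by
      rw [hpdef, hτdef, astar]
    rw [omegaDQ, harg, ← hmcast]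
    congr 1
    ring
  have hw : omegaDQ ζ δ ((n : ℝ) / (s : ℝ)) ^ ((1 : ℝ) / 10)
      = Real.exp (-((m : ℝ) * pstar) / 10) := by
    rw [homega, ← Real.exp_mul]
    congr 1
    ring
  have hmp0 : 0 ≤ (m : ℝ) * pstar := by positivity
  set w : ℝ := Real.exp (-((m : ℝ) * pstar) / 10) with hwdef
  have hw0 : 0 ≤ w := (Real.exp_pos _).le
  have hw1 : w ≤ 1 := by
    rw [hwdef, Real.exp_le_one_iff]; linarith
  have hρm : (ρ : ℝ) ≤ (m : ℝ) * pstar / 2 := by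
    rw [homega, one_div, ← Real.exp_neg, Real.log_exp, neg_neg] at hρ_le
    exact hρ_le
  set μ : Measure ℝ := noiseMeasure ζ with hμ
  set ν : Measure (Fin m → ℝ) := Measure.pi fun _ : Fin m => μ with hν
  haveI : IsProbabilityMeasure ν := by rw [hν]; infer_instance
  set B : Set (Fin m → ℝ) := {y | ρ ≤ (Finset.univ.filter fun i => τ < y i).card} with hB
  set C : Set (Fin m → ℝ) :=
    {y | (Finset.univ.filter fun i => τ < y i).card ≤ ρ - 1} with hC
  -- Chernoff bound on the bad event
  have hCle : ν C ≤ ENNReal.ofReal w := by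
    calc ν C ≤ 2 ^ (ρ - 1) * (2⁻¹ * μ (Set.Ioi τ) + (1 - μ (Set.Ioi τ))) ^ m :=
          chernoff_pi μ τ (ρ - 1)
      _ = ENNReal.ofReal ((2 : ℝ) ^ (ρ - 1) * (1 - pstar / 2) ^ m) := by
          rw [hμ, noise_Ioi hζ τ, ← hpdef]
          have e1 : (2⁻¹ : ℝ≥0∞) * ENNReal.ofReal pstar = ENNReal.ofReal (pstar / 2) := by
            rw [div_eq_inv_mul, ENNReal.ofReal_mul (by norm_num),
              ENNReal.ofReal_inv_of_pos two_pos, ENNReal.ofReal_ofNat]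
          have e2 : (1 : ℝ≥0∞) - ENNReal.ofReal pstar = ENNReal.ofReal (1 - pstar) := by
            rw [ENNReal.ofReal_sub _ hp0, ENNReal.ofReal_one]
          rw [e1, e2, ← ENNReal.ofReal_add (by positivity) (by linarith),
            show pstar / 2 + (1 - pstar) = 1 - pstar / 2 by ring,
            ← ENNReal.ofReal_pow (by linarith),
            show (2 : ℝ≥0∞) ^ (ρ - 1) = ENNReal.ofReal ((2 : ℝ) ^ (ρ - 1)) by
              rw [ENNReal.ofReal_pow (by norm_num)]; norm_num,
            ← ENNReal.ofReal_mul (by positivity)]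
      _ ≤ ENNReal.ofReal w := by
          exact ENNReal.ofReal_le_ofReal (real_chernoff_bound hp0 hp1 hρm)
  -- lower bound on the good event
  have hBge : (1 : ℝ≥0∞) - ENNReal.ofReal w ≤ ν B := by
    rw [tsub_le_iff_right]
    have hunion : B ∪ C = Set.univ := by
      ext y
      simp only [hB, hC, Set.mem_union, Set.mem_setOf_eq, Set.mem_univ, iff_true]
      rcases le_or_gt ρ ((Finset.univ.filter fun i => τ < y i).card) with h | h
      · exact Or.inl h
      · exact Or.inr (Nat.le_sub_one_of_lt h)
    calc (1 : ℝ≥0∞) = ν Set.univ := (measure_univ).symm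
      _ = ν (B ∪ C) := by rw [hunion]
      _ ≤ ν B + ν C := measure_union_le B C
      _ ≤ ν B + ENNReal.ofReal w := by gcongr
  -- the product event
  set E : Set (ℝ × (Fin m → ℝ)) :=
    {x | ρ ≤ (Finset.univ.filter fun i => astar ζ n s + b + x.1 < x.2 i).card} with hE
  have hpn : pn ζ n s b ρ = ((μ.prod ν) E).toReal := rfl
  have hsubE : (Set.Iio (-(b + δ))) ×ˢ B ⊆ E := by
    rintro ⟨x, y⟩ ⟨hx, hy⟩
    simp only [Set.mem_Iio] at hx
    simp only [hB, Set.mem_setOf_eq] at hy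
    simp only [hE, Set.mem_setOf_eq]
    refine le_trans hy (Finset.card_le_card ?_)
    intro i hi
    simp only [Finset.mem_filter] at hi ⊢
    refine ⟨hi.1, lt_of_le_of_lt ?_ hi.2⟩
    rw [hτdef]
    linarith
  have hkey : ENNReal.ofReal (Fbar ζ (b + δ)) * ((1 : ℝ≥0∞) - ENNReal.ofReal w)
      ≤ (μ.prod ν) E := by
    calc ENNReal.ofReal (Fbar ζ (b + δ)) * ((1 : ℝ≥0∞) - ENNReal.ofReal w)
        ≤ μ (Set.Iio (-(b + δ))) * ν B := by
          rw [hμ, noise_Iio hζ (b + δ)]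
          exact mul_le_mul_right hBge _
      _ = (μ.prod ν) ((Set.Iio (-(b + δ))) ×ˢ B) := (Measure.prod_prod _ _).symm
      _ ≤ (μ.prod ν) E := measure_mono hsubE
  rw [hw, hpn]
  have hfin : (μ.prod ν) E ≠ ∞ := (measure_lt_top _ _).ne
  refine le_trans ?_ (ENNReal.toReal_mono hfin hkey)
  have : (1 : ℝ≥0∞) - ENNReal.ofReal w = ENNReal.ofReal (1 - w) := by
    rw [ENNReal.ofReal_sub _ hw0, ENNReal.ofReal_one]
  rw [this, ← ENNReal.ofReal_mul (Fbar_nonneg hζ _), ENNReal.toReal_ofReal (mul_nonneg (Fbar_nonneg hζ _) (by linarith))]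
  nlinarith [Fbar_le_one hζ (b + δ), Fbar_nonneg hζ (b + δ)]
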